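/- A group G (not necessarily finitely generated) satisfies the universal theory of a nonabelian free group if and only if G is locally fully residually free, i.e., every finitely generated subgroup of G is fully residually free. -/

import Mathlib

open FirstOrder

/-- The first-order language of groups. -/
def grpLang : FirstOrder.Language :=
  ⟨fun n => match n with | 0 => Unit | 1 => Unit | 2 => Unit | _ => Empty,
   fun _ => Empty⟩

instance grpStructure (G : Type*) [Group G] : grpLang.Structure G where
  funMap {n} f v :=
    match n, f, v with
    | 0, _, _ => 1
    | 1, _, v => (v 0)⁻¹
    | 2, _, v => v 0 * v 1
  RelMap {n} r _ := nomatch r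

/-- A sentence is universal if it is a universally quantified quantifier-free formula. -/
def IsUniversalSentence (φ : grpLang.Sentence) : Prop :=
  ∃ (n : ℕ) (ψ : grpLang.BoundedFormula Empty n), ψ.IsQF ∧ φ = ψ.alls

/-- Fully residually free. -/
def FullyResiduallyFree (G : Type*) [Group G] : Prop :=
  ∀ S : Finset G, ∃ (α : Type) (f : G →* FreeGroup α), Set.InjOn f (S : Set G)

/-- Locally fully residually free: every finitely generated subgroup is fully
residually free. -/
def LocallyFullyResiduallyFree (G : Type*) [Group G] : Prop :=
  ∀ H : Subgroup G, H.FG → FullyResiduallyFree H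

noncomputable section

abbrev M2 : Type := Matrix (Fin 2) (Fin 2) ℤ

def Bpow (n : ℤ) : M2ˣ :=
  ⟨!![1, 0; 2*n, 1], !![1, 0; -(2*n), 1],
   by ext i j; fin_cases i <;> fin_cases j <;>
     simp [Matrix.mul_apply, Fin.sum_univ_two] <;> ring,
   by ext i j; fin_cases i <;> fin_cases j <;>
     simp [Matrix.mul_apply, Fin.sum_univ_two] <;> ring⟩

def Amat : M2ˣ :=
  ⟨!![1, 2; 0, 1], !![1, -2; 0, 1],
   by ext i j; fin_cases i <;> fin_cases j <;>
     simp [Matrix.mul_apply, Fin.sum_univ_two],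
   by ext i j; fin_cases i <;> fin_cases j <;>
     simp [Matrix.mul_apply, Fin.sum_univ_two]⟩

lemma Bpow_add (m n : ℤ) : Bpow (m + n) = Bpow m * Bpow n := by
  ext i j
  fin_cases i <;> fin_cases j <;>
    simp [Bpow, Matrix.mul_apply, Fin.sum_univ_two] <;> ring

lemma Bpow_zero : Bpow 0 = 1 := by
  ext i j; fin_cases i <;> fin_cases j <;> simp [Bpow]

lemma Bpow_neg (n : ℤ) : Bpow (-n) = (Bpow n)⁻¹ := by
  rw [eq_inv_iff_mul_eq_one, ← Bpow_add]
  simp [Bpow_zero]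

def V : Type := {v : Fin 2 → ℤ // v ≠ 0}

instance : MulAction M2ˣ V where
  smul u v := ⟨(u : M2).mulVec v.1, by
    intro h
    apply v.2
    have : ((u⁻¹ : M2ˣ) : M2).mulVec ((u : M2).mulVec v.1) = ((u⁻¹ : M2ˣ) : M2).mulVec 0 := by
      rw [h]
    rwa [Matrix.mulVec_mulVec, Matrix.mulVec_zero, ← Units.val_mul, inv_mul_cancel,
      Units.val_one, Matrix.one_mulVec] at this⟩
  one_smul v := Subtype.ext (by show ((1 : M2ˣ) : M2).mulVec v.1 = v.1; simp [Matrix.one_mulVec])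
  mul_smul u w v := Subtype.ext (by
    show ((u * w : M2ˣ) : M2).mulVec v.1 = (u : M2).mulVec ((w : M2).mulVec v.1)
    rw [Matrix.mulVec_mulVec, Units.val_mul])

lemma smul_coords (u : M2ˣ) (v : V) : (u • v).1 = (u : M2).mulVec v.1 := rfl

def Pplus (v : V) : Prop := v.1 1 ≠ 0 ∧ v.1 0 * v.1 1 > (v.1 1)^2
def Pminus (v : V) : Prop := v.1 1 = 0 ∨ (v.1 1 ≠ 0 ∧ v.1 0 * v.1 1 ≤ -(v.1 1)^2)

lemma Pdisj (v : V) : ¬ (Pplus v ∧ Pminus v) := by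
  rintro ⟨⟨hy, h1⟩, (h2 | ⟨-, h2⟩)⟩
  · exact hy h2
  · nlinarith [sq_nonneg (v.1 1)]

lemma mulVec_A (v : Fin 2 → ℤ) :
    (Amat : M2).mulVec v = ![v 0 + 2 * v 1, v 1] := by
  funext i; fin_cases i <;>
    simp [Amat, Matrix.mulVec, dotProduct, Fin.sum_univ_two] <;> ring

lemma mulVec_Ainv (v : Fin 2 → ℤ) :
    ((Amat⁻¹ : M2ˣ) : M2).mulVec v = ![v 0 - 2 * v 1, v 1] := by
  funext i; fin_cases i <;>
    simp [Amat, Matrix.mulVec, dotProduct, Fin.sum_univ_two] <;> ring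

lemma mulVec_B (n : ℤ) (v : Fin 2 → ℤ) :
    (Bpow n : M2).mulVec v = ![v 0, v 1 + 2 * n * v 0] := by
  funext i; fin_cases i <;>
    simp [Bpow, Matrix.mulVec, dotProduct, Fin.sum_univ_two] <;> ring

lemma pingA (v : V) (h : ¬ Pminus v) : Pplus (Amat • v) := by
  obtain ⟨hy, hgt⟩ : v.1 1 ≠ 0 ∧ v.1 0 * v.1 1 > -(v.1 1)^2 := by
    by_contra hc
    apply h
    rcases eq_or_ne (v.1 1) 0 with h0 | h0
    · exact Or.inl h0
    · exact Or.inr ⟨h0, by push_neg at hc; linarith [hc h0]⟩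
  constructor
  · show (Amat • v).1 1 ≠ 0
    rw [smul_coords, mulVec_A]; simpa using hy
  · show (Amat • v).1 0 * (Amat • v).1 1 > ((Amat • v).1 1)^2
    rw [smul_coords, mulVec_A]
    simp only [Matrix.cons_val_zero, Matrix.cons_val_one, Matrix.head_cons]
    nlinarith [sq_nonneg (v.1 1)]

lemma pingA' (v : V) (h : ¬ Pplus v) : Pminus (Amat⁻¹ • v) := by
  rcases eq_or_ne (v.1 1) 0 with h0 | h0
  · left
    show (Amat⁻¹ • v).1 1 = 0
    rw [smul_coords, mulVec_Ainv]; simpa using h0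
  · have hle : v.1 0 * v.1 1 ≤ (v.1 1)^2 := by
      by_contra hc; exact h ⟨h0, by push_neg at hc; linarith⟩
    right
    constructor
    · show (Amat⁻¹ • v).1 1 ≠ 0
      rw [smul_coords, mulVec_Ainv]; simpa using h0
    · show (Amat⁻¹ • v).1 0 * (Amat⁻¹ • v).1 1 ≤ -((Amat⁻¹ • v).1 1)^2
      rw [smul_coords, mulVec_Ainv]
      simp only [Matrix.cons_val_zero, Matrix.cons_val_one, Matrix.head_cons]
      nlinarith

lemma vx_ne_zero (v : V) (h : v.1 1 = 0) : v.1 0 ≠ 0 := by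
  intro h0
  apply v.2
  funext i; fin_cases i <;> simp [h, h0]


section IntLemmas

lemma mainInt (n x y : ℤ) (hn2 : 1 ≤ n^2) (hxy : y^2 < x^2) :
    ¬(y + 2*n*x ≠ 0 ∧ x * (y + 2*n*x) > (y + 2*n*x)^2) ∧
      ¬((y + 2*n*x = 0) ∨ ((y + 2*n*x) ≠ 0 ∧ x * (y + 2*n*x) ≤ -(y + 2*n*x)^2)) := by
  have hz2 : x^2 < (y + 2*n*x)^2 := by
    nlinarith [sq_nonneg (n*x + y), mul_nonneg (by linarith : (0:ℤ) ≤ n^2 - 1) (sq_nonneg x)]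
  have hz0 : y + 2*n*x ≠ 0 := by
    intro h0; rw [h0] at hz2; nlinarith [sq_nonneg x]
  refine ⟨?_, ?_⟩
  · rintro ⟨-, hgt⟩
    nlinarith [sq_nonneg (x - (y + 2*n*x))]
  · rintro (h0 | ⟨-, hle⟩)
    · exact hz0 h0
    · nlinarith [sq_nonneg (x + (y + 2*n*x))]

lemma intPing (n x y : ℤ) (hn : n ≠ 0) (hne : ¬(x = 0 ∧ y = 0))
    (h : (y ≠ 0 ∧ x*y > y^2) ∨ (y = 0 ∨ (y ≠ 0 ∧ x*y ≤ -y^2))) :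
    ¬(y + 2*n*x ≠ 0 ∧ x * (y + 2*n*x) > (y + 2*n*x)^2) ∧
      ¬((y + 2*n*x = 0) ∨ ((y + 2*n*x) ≠ 0 ∧ x * (y + 2*n*x) ≤ -(y + 2*n*x)^2)) := by
  have hn2 : 1 ≤ n^2 := by rcases lt_or_gt_of_ne hn with h' | h' <;> nlinarith
  rcases h with ⟨hy0, hgt⟩ | (h0 | ⟨hy0, hle⟩)
  · apply mainInt n x y hn2
    have hy2 : 0 < y^2 := by rcases hy0.lt_or_gt with h'|h' <;> nlinarith
    nlinarith [sq_nonneg (x - y)]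
  · -- y = 0, x ≠ 0
    have hx0 : x ≠ 0 := fun h' => hne ⟨h', h0⟩
    apply mainInt n x y hn2
    have : 0 < x^2 := by rcases hx0.lt_or_gt with h'|h' <;> nlinarith
    rw [h0]; simpa using this
  · -- y ≠ 0, x*y ≤ -y^2
    have hy2 : 0 < y^2 := by rcases hy0.lt_or_gt with h'|h' <;> nlinarith
    rcases lt_trichotomy (x^2) (y^2) with hlt | heq | hgt2
    · exfalso
      nlinarith [sq_nonneg (x*y + y^2), mul_lt_mul_of_pos_right hlt hy2,
        mul_le_mul_of_nonneg_right hle (le_of_lt hy2)]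
    · -- x^2 = y^2 and x*y ≤ -y^2 < 0 force y = -x
      have hyx : y = -x := by nlinarith [sq_nonneg (x + y)]
      have hx0 : x ≠ 0 := by intro h'; apply hy0; rw [hyx, h', neg_zero]
      have hx2 : 0 < x^2 := by rcases hx0.lt_or_gt with h'|h' <;> nlinarith
      have hzx : y + 2*n*x = (2*n - 1) * x := by rw [hyx]; ring
      have h2n : 2*n - 1 ≠ 0 := by omega
      have hz0 : y + 2*n*x ≠ 0 := by rw [hzx]; exact mul_ne_zero h2n hx0
      constructor
      · rintro ⟨-, hgt⟩
        rw [hzx] at hgt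
        rcases lt_or_gt_of_ne hn with hneg | hpos
        · have h1 : 2*n - 1 ≤ -1 := by omega
          nlinarith [mul_nonneg (mul_nonneg (by linarith : (0:ℤ) ≤ -(2*n-1))
            (by linarith : (0:ℤ) ≤ -(2*n-1))) (le_of_lt hx2)]
        · have h1 : 1 ≤ 2*n - 1 := by omega
          nlinarith [mul_nonneg (mul_nonneg (by linarith : (0:ℤ) ≤ 2*n-2)
            (by linarith : (0:ℤ) ≤ 2*n-1)) (le_of_lt hx2)]
      · rintro (h0 | ⟨-, hle2⟩)
        · exact hz0 h0
        · rw [hzx] at hle2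
          rcases lt_or_gt_of_ne hn with hneg | hpos
          · have h1 : 2*n - 1 ≤ -3 := by omega
            nlinarith [mul_nonneg (mul_nonneg (by linarith : (0:ℤ) ≤ -(2*n-1) - 1)
              (by linarith : (0:ℤ) ≤ -(2*n-1))) (le_of_lt hx2)]
          · have h1 : 1 ≤ 2*n - 1 := by omega
            nlinarith [mul_nonneg (mul_nonneg (by linarith : (0:ℤ) ≤ 2*n-2)
              (by linarith : (0:ℤ) ≤ 2*n-1)) (le_of_lt hx2)]
    · exact mainInt n x y hn2 hgt2

end IntLemmas

lemma pingB (n : ℤ) (hn : n ≠ 0) (v : V) (h : Pplus v ∨ Pminus v) :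
    ¬ Pplus (Bpow n • v) ∧ ¬ Pminus (Bpow n • v) := by
  have hcx : (Bpow n • v).1 0 = v.1 0 := by rw [smul_coords, mulVec_B]; rfl
  have hcy : (Bpow n • v).1 1 = v.1 1 + 2 * n * v.1 0 := by rw [smul_coords, mulVec_B]; rfl
  have hne : ¬(v.1 0 = 0 ∧ v.1 1 = 0) := by
    rintro ⟨h1, h2⟩
    exact v.2 (by funext i; fin_cases i <;> simp [h1, h2])
  have key := intPing n (v.1 0) (v.1 1) hn hne (by
    rcases h with h | h
    · exact Or.inl ⟨h.1, h.2⟩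
    · rcases h with h | h
      · exact Or.inr (Or.inl h)
      · exact Or.inr (Or.inr h))
  constructor
  · rintro ⟨h1, h2⟩
    rw [hcy] at h1
    rw [hcx, hcy] at h2
    exact key.1 ⟨h1, h2⟩
  · rintro (h1 | ⟨h1, h2⟩)
    · rw [hcy] at h1
      exact key.2 (Or.inl h1)
    · rw [hcy] at h1
      rw [hcx, hcy] at h2
      exact key.2 (Or.inr ⟨h1, h2⟩)

def agen : ℤ → M2ˣ := fun i => Bpow i * Amat * Bpow (-i)

def p0 : V := ⟨![2, 1], by intro h; simpa using congrFun h 1⟩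

lemma Pplus_p0 : Pplus p0 := by
  constructor
  · show (![2, 1] : Fin 2 → ℤ) 1 ≠ 0
    norm_num
  · show (![2, 1] : Fin 2 → ℤ) 0 * (![2, 1] : Fin 2 → ℤ) 1 > ((![2, 1] : Fin 2 → ℤ) 1) ^ 2
    norm_num

def Xset (i : ℤ) : Set V := {v | Pplus (Bpow (-i) • v)}
def Yset (i : ℤ) : Set V := {v | Pminus (Bpow (-i) • v)}

lemma Bpow_smul_smul (m n : ℤ) (v : V) : Bpow m • Bpow n • v = Bpow (m + n) • v := by
  rw [smul_smul, ← Bpow_add]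

lemma PBdisj {i j : ℤ} (hij : i ≠ j) (v : V)
    (hi : Pplus (Bpow (-i) • v) ∨ Pminus (Bpow (-i) • v))
    (hj : Pplus (Bpow (-j) • v) ∨ Pminus (Bpow (-j) • v)) : False := by
  have hco : Bpow (-i) • v = Bpow (j - i) • (Bpow (-j) • v) := by
    rw [Bpow_smul_smul]; congr 1; ring
  have key := pingB (j - i) (by omega) (Bpow (-j) • v) hj
  rcases hi with hi | hi
  · exact key.1 (hco ▸ hi)
  · exact key.2 (hco ▸ hi)

lemma lift_agen_injective : Function.Injective (FreeGroup.lift agen) := by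
  apply FreeGroup.injective_lift_of_ping_pong agen Xset Yset
  · -- nonempty
    intro i
    refine ⟨Bpow i • p0, ?_⟩
    show Pplus (Bpow (-i) • Bpow i • p0)
    rw [Bpow_smul_smul, neg_add_cancel, Bpow_zero, one_smul]
    exact Pplus_p0
  · -- X disjoint
    intro i j hij
    rw [Function.onFun, Set.disjoint_left]
    intro v hv1 hv2
    exact PBdisj hij v (Or.inl hv1) (Or.inl hv2)
  · -- Y disjoint
    intro i j hij
    rw [Function.onFun, Set.disjoint_left]
    intro v hv1 hv2
    exact PBdisj hij v (Or.inr hv1) (Or.inr hv2)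
  · -- X vs Y disjoint
    intro i j
    rw [Set.disjoint_left]
    intro v hv1 hv2
    rcases eq_or_ne i j with rfl | hij
    · exact Pdisj _ ⟨hv1, hv2⟩
    · exact PBdisj hij v (Or.inl hv1) (Or.inr hv2)
  · -- hX
    intro i w hw
    obtain ⟨v, hv, rfl⟩ := hw
    have hv' : ¬ Pminus (Bpow (-i) • v) := hv
    show Pplus (Bpow (-i) • agen i • v)
    have hco : Bpow (-i) • agen i • v = Amat • Bpow (-i) • v := by
      rw [smul_smul, smul_smul, agen]
      congr 1
      rw [← mul_assoc, ← mul_assoc, ← Bpow_add, neg_add_cancel, Bpow_zero, one_mul]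
    rw [hco]
    exact pingA _ hv'
  · -- hY
    intro i w hw
    obtain ⟨v, hv, rfl⟩ := hw
    have hv' : ¬ Pplus (Bpow (-i) • v) := hv
    show Pminus (Bpow (-i) • (agen⁻¹ i) • v)
    have hco : Bpow (-i) • (agen⁻¹ i) • v = Amat⁻¹ • Bpow (-i) • v := by
      rw [smul_smul, smul_smul]
      congr 1
      show Bpow (-i) * (agen i)⁻¹ = _
      rw [agen]
      simp only [mul_inv_rev, ← Bpow_neg, neg_neg]
      rw [← mul_assoc, ← Bpow_add, neg_add_cancel, Bpow_zero, one_mul]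
    rw [hco]
    exact pingA' _ hv'

noncomputable section M3
open Function
open scoped Classical

variable {γ : Type} {δ : Type}

/-- Any group hom out of a free group applied to `mk L` is the obvious product. -/
lemma hom_mk_prod {N : Type*} [Group N] (g : FreeGroup γ →* N) (L : List (γ × Bool)) :
    g (FreeGroup.mk L) = (L.map fun p => cond p.2 (g (FreeGroup.of p.1))
      (g (FreeGroup.of p.1))⁻¹).prod := by
  have h1 : g (FreeGroup.mk L) = FreeGroup.lift (fun a => g (FreeGroup.of a)) (FreeGroup.mk L) :=
    DFunLike.congr_fun (FreeGroup.ext_hom g (FreeGroup.lift (fun a => g (FreeGroup.of a)))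
      (by intro a; simp)) (FreeGroup.mk L)
  rw [h1, FreeGroup.lift_mk]

instance freeGroup_subsingleton [IsEmpty γ] : Subsingleton (FreeGroup γ) := by
  constructor
  intro x y
  have hx : ∀ z : FreeGroup γ, z = 1 := by
    intro z
    have h : z.toWord = [] := by
      cases h : z.toWord with
      | nil => rfl
      | cons p L => exact (IsEmpty.false p.1).elim
    have h2 := FreeGroup.mk_toWord (x := z)
    rw [h] at h2
    rw [← h2, ← FreeGroup.toWord_one (α := γ), FreeGroup.mk_toWord]
  rw [hx x, hx y]

lemma freeGroupMap_injective {f : γ → δ} (hf : Injective f) :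
    Injective (FreeGroup.map f) := by
  rcases isEmpty_or_nonempty γ with hE | hN
  · intro x y _; exact Subsingleton.elim x y
  · intro x y hxy
    have h2 := congrArg (FreeGroup.map (Function.invFun f)) hxy
    rw [FreeGroup.map.comp f (Function.invFun f) x,
      FreeGroup.map.comp f (Function.invFun f) y,
      Function.invFun_comp hf, FreeGroup.map.id, FreeGroup.map.id] at h2
    exact h2

/-- The retraction onto the subgroup generated by a subset of letters. -/
def retr (s : Finset δ) : FreeGroup δ →* FreeGroup {b // b ∈ s} :=
  FreeGroup.lift (fun b => if h : b ∈ s then FreeGroup.of (⟨b, h⟩ : {b // b ∈ s}) else 1)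

def incl (s : Finset δ) : FreeGroup {b // b ∈ s} →* FreeGroup δ :=
  FreeGroup.map Subtype.val

lemma incl_injective (s : Finset δ) : Injective (incl s) :=
  freeGroupMap_injective Subtype.val_injective

lemma incl_retr (s : Finset δ) (x : FreeGroup δ) (hx : ∀ p ∈ x.toWord, p.1 ∈ s) :
    incl s (retr s x) = x := by
  have hxmk : FreeGroup.mk x.toWord = x := FreeGroup.mk_toWord
  have key : ((incl s).comp (retr s)) (FreeGroup.mk x.toWord)
      = (MonoidHom.id (FreeGroup δ)) (FreeGroup.mk x.toWord) := by
    rw [hom_mk_prod ((incl s).comp (retr s)), hom_mk_prod (MonoidHom.id (FreeGroup δ))]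
    congr 1
    apply List.map_congr_left
    intro p hp
    have h1 : ((incl s).comp (retr s)) (FreeGroup.of p.1) = FreeGroup.of p.1 := by
      simp only [MonoidHom.comp_apply, retr, FreeGroup.lift_apply_of, dif_pos (hx p hp)]
      simp [incl]
    rw [h1, MonoidHom.id_apply]
  rw [hxmk] at key
  exact key

/-- Every finite family of elements of a free group comes from a finitely
generated free factor. -/
lemma exists_support (T : List (FreeGroup δ)) :
    ∃ s : Finset δ, ∀ x ∈ T, incl s (retr s x) = x := by
  classical
  refine ⟨(T.flatMap fun x => x.toWord.map Prod.fst).toFinset, ?_⟩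
  intro x hx
  apply incl_retr
  intro p hp
  rw [List.mem_toFinset]
  exact List.mem_flatMap.mpr ⟨x, hx, List.mem_map.mpr ⟨p, hp, rfl⟩⟩

end M3

noncomputable section M3b

def e1 : FreeGroup ℤ →* FreeGroup Bool :=
  FreeGroup.lift (fun i => (FreeGroup.of true) ^ i * FreeGroup.of false * (FreeGroup.of true) ^ (-i))

def E2 : FreeGroup Bool →* M2ˣ :=
  FreeGroup.lift (fun b => cond b (Bpow 1) Amat)

lemma Bpow_one_zpow (i : ℤ) : (Bpow 1) ^ i = Bpow i := by
  induction i using Int.induction_on with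
  | zero => rw [zpow_zero, Bpow_zero]
  | succ n ih => rw [zpow_add_one, ih, ← Bpow_add]
  | pred n ih =>
      rw [zpow_sub_one, ih, ← Bpow_neg 1, ← Bpow_add]
      congr 1

lemma E2_e1 : E2.comp e1 = FreeGroup.lift agen := by
  apply FreeGroup.ext_hom
  intro i
  simp only [MonoidHom.comp_apply, e1, FreeGroup.lift_apply_of, map_mul, map_zpow, E2, agen,
    Bpow_one_zpow, cond_true, cond_false]

lemma e1_injective : Function.Injective e1 := by
  intro x y h
  apply lift_agen_injective
  rw [← E2_e1]
  simp only [MonoidHom.comp_apply, h]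

lemma exists_emb_to_M2 (γ : Type) [Countable γ] :
    ∃ j : FreeGroup γ →* M2ˣ, Function.Injective j := by
  obtain ⟨f, hf⟩ := exists_injective_nat γ
  refine ⟨(FreeGroup.lift agen).comp (FreeGroup.map (fun c => (f c : ℤ))), ?_⟩
  rw [MonoidHom.coe_comp]
  exact lift_agen_injective.comp (freeGroupMap_injective (fun a b h => hf (by simpa using h)))

lemma exists_emb_to_freeGroup (γ : Type) [Countable γ] (β : Type) (b₁ b₂ : β) (hb : b₁ ≠ b₂) :
    ∃ j : FreeGroup γ →* FreeGroup β, Function.Injective j := by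
  obtain ⟨f, hf⟩ := exists_injective_nat γ
  refine ⟨(FreeGroup.map (fun c => cond c b₁ b₂)).comp
    (e1.comp (FreeGroup.map (fun c => (f c : ℤ)))), ?_⟩
  rw [MonoidHom.coe_comp, MonoidHom.coe_comp]
  refine (freeGroupMap_injective ?_).comp (e1_injective.comp (freeGroupMap_injective ?_))
  · intro a b h; cases a <;> cases b <;> simp_all
  · intro a b h; exact hf (by simpa using h)

lemma exists_injOn_freeGroup (α₀ β : Type) (b₁ b₂ : β) (hb : b₁ ≠ b₂)
    (T : List (FreeGroup α₀)) :
    ∃ g : FreeGroup α₀ →* FreeGroup β, ∀ x ∈ T, ∀ y ∈ T, g x = g y → x = y := by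
  obtain ⟨s, hs⟩ := exists_support T
  obtain ⟨j, hj⟩ := exists_emb_to_freeGroup {b // b ∈ s} β b₁ b₂ hb
  refine ⟨j.comp (retr s), ?_⟩
  intro x hx y hy hxy
  have h2 : retr s x = retr s y := hj (by simpa using hxy)
  rw [← hs x hx, ← hs y hy, h2]

end M3b

noncomputable section M5
open MvPolynomial

abbrev PRing (k : ℕ) : Type := MvPolynomial ((Fin k × Bool) × Fin 2 × Fin 2) ℤ

def genMat (k : ℕ) (i : Fin k) (b : Bool) : Matrix (Fin 2) (Fin 2) (PRing k) :=
  Matrix.of fun a c => MvPolynomial.X ((i, b), a, c)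

def relSet (k : ℕ) : Set (PRing k) :=
  {q | ∃ (i : Fin k) (a c : Fin 2),
    q = (genMat k i true * genMat k i false - 1) a c ∨
      q = (genMat k i false * genMat k i true - 1) a c}

def I0 (k : ℕ) : Ideal (PRing k) := Ideal.span (relSet k)

abbrev QRing (k : ℕ) := PRing k ⧸ I0 k

instance (k : ℕ) : IsNoetherianRing (QRing k) :=
  isNoetherianRing_of_surjective (PRing k) (QRing k) (Ideal.Quotient.mk (I0 k))
    Ideal.Quotient.mk_surjective

def qmk (k : ℕ) : PRing k →+* QRing k := Ideal.Quotient.mk (I0 k)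

lemma mapMatrix_eq_one (k : ℕ) (M : Matrix (Fin 2) (Fin 2) (PRing k))
    (h : ∀ a c, (M - 1) a c ∈ I0 k) : (qmk k).mapMatrix M = 1 := by
  ext a c
  rw [RingHom.mapMatrix_apply, Matrix.map_apply]
  have h2 : qmk k ((M - 1) a c) = 0 := Ideal.Quotient.eq_zero_iff_mem.mpr (h a c)
  rw [Matrix.sub_apply, map_sub, sub_eq_zero] at h2
  rw [h2]
  rcases eq_or_ne a c with rfl | hac
  · simp [Matrix.one_apply]
  · simp [Matrix.one_apply, hac]

def ubar (k : ℕ) (i : Fin k) : (Matrix (Fin 2) (Fin 2) (QRing k))ˣ where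
  val := (qmk k).mapMatrix (genMat k i true)
  inv := (qmk k).mapMatrix (genMat k i false)
  val_inv := by
    rw [← map_mul]
    apply mapMatrix_eq_one
    intro a c
    exact Ideal.subset_span ⟨i, a, c, Or.inl rfl⟩
  inv_val := by
    rw [← map_mul]
    apply mapMatrix_eq_one
    intro a c
    exact Ideal.subset_span ⟨i, a, c, Or.inr rfl⟩

def Phi (k : ℕ) : FreeGroup (Fin k) →* (Matrix (Fin 2) (Fin 2) (QRing k))ˣ :=
  FreeGroup.lift (ubar k)

def evalAt (k : ℕ) (g : Fin k → M2ˣ) : PRing k →+* ℤ :=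
  (MvPolynomial.eval (fun v : (Fin k × Bool) × Fin 2 × Fin 2 =>
    (cond v.1.2 ((g v.1.1 : M2ˣ) : M2) (((g v.1.1)⁻¹ : M2ˣ) : M2)) v.2.1 v.2.2))

lemma evalAt_genMat (k : ℕ) (g : Fin k → M2ˣ) (i : Fin k) (b : Bool) :
    (evalAt k g).mapMatrix (genMat k i b) =
      cond b ((g i : M2ˣ) : M2) (((g i)⁻¹ : M2ˣ) : M2) := by
  ext a c
  cases b <;> simp [evalAt, genMat, RingHom.mapMatrix_apply]

lemma evalAt_kills (k : ℕ) (g : Fin k → M2ˣ) : ∀ q ∈ I0 k, evalAt k g q = 0 := by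
  have hspan : I0 k ≤ RingHom.ker (evalAt k g) := by
    apply Ideal.span_le.mpr
    rintro q ⟨i, a, c, (rfl | rfl)⟩ <;> rw [SetLike.mem_coe, RingHom.mem_ker]
    · have h1 : (evalAt k g).mapMatrix (genMat k i true * genMat k i false - 1) = 0 := by
        rw [map_sub, map_mul, map_one, evalAt_genMat, evalAt_genMat]
        show ((g i : M2ˣ) : M2) * (((g i)⁻¹ : M2ˣ) : M2) - 1 = 0
        rw [← Units.val_mul, mul_inv_cancel, Units.val_one, sub_self]
      calc evalAt k g ((genMat k i true * genMat k i false - 1) a c)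
          = ((evalAt k g).mapMatrix (genMat k i true * genMat k i false - 1)) a c := rfl
        _ = 0 := by rw [h1]; rfl
    · have h1 : (evalAt k g).mapMatrix (genMat k i false * genMat k i true - 1) = 0 := by
        rw [map_sub, map_mul, map_one, evalAt_genMat, evalAt_genMat]
        show (((g i)⁻¹ : M2ˣ) : M2) * ((g i : M2ˣ) : M2) - 1 = 0
        rw [← Units.val_mul, inv_mul_cancel, Units.val_one, sub_self]
      calc evalAt k g ((genMat k i false * genMat k i true - 1) a c)
          = ((evalAt k g).mapMatrix (genMat k i false * genMat k i true - 1)) a c := rfl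
        _ = 0 := by rw [h1]; rfl
  intro q hq
  exact RingHom.mem_ker.mp (hspan hq)

def ebar (k : ℕ) (g : Fin k → M2ˣ) : QRing k →+* ℤ :=
  Ideal.Quotient.lift (I0 k) (evalAt k g) (evalAt_kills k g)

def Emap (k : ℕ) (g : Fin k → M2ˣ) : (Matrix (Fin 2) (Fin 2) (QRing k))ˣ →* M2ˣ :=
  Units.map ((ebar k g).mapMatrix).toMonoidHom

lemma Emap_Phi (k : ℕ) (g : Fin k → M2ˣ) (w : FreeGroup (Fin k)) :
    Emap k g (Phi k w) = FreeGroup.lift g w := by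
  have h : (Emap k g).comp (Phi k) = FreeGroup.lift g := by
    apply FreeGroup.ext_hom
    intro i
    apply Units.ext
    show (Units.map ((ebar k g).mapMatrix).toMonoidHom
      (FreeGroup.lift (ubar k) (FreeGroup.of i))).val = ((FreeGroup.lift g) (FreeGroup.of i)).val
    rw [FreeGroup.lift_apply_of, FreeGroup.lift_apply_of, Units.coe_map]
    show ((ebar k g).mapMatrix) ((qmk k).mapMatrix (genMat k i true)) = ((g i : M2ˣ) : M2)
    have h2 : (ebar k g).mapMatrix ((qmk k).mapMatrix (genMat k i true))
        = (evalAt k g).mapMatrix (genMat k i true) := by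
      ext a c
      simp only [RingHom.mapMatrix_apply, Matrix.map_apply]
      exact Ideal.Quotient.lift_mk (I0 k) (evalAt k g) (evalAt_kills k g)
    rw [h2, evalAt_genMat]
    rfl
  exact DFunLike.congr_fun h w

lemma entry_ebar_Phi (k : ℕ) (g : Fin k → M2ˣ) (w : FreeGroup (Fin k)) (a c : Fin 2) :
    ebar k g ((((Phi k w) : Matrix (Fin 2) (Fin 2) (QRing k)) - 1) a c)
      = (((FreeGroup.lift g w : M2ˣ) : M2) - 1) a c := by
  have h := congrArg Units.val (Emap_Phi k g w)
  have h2 : (ebar k g).mapMatrix ((Phi k w : Matrix (Fin 2) (Fin 2) (QRing k)))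
      = ((FreeGroup.lift g w : M2ˣ) : M2) := h
  rw [Matrix.sub_apply, Matrix.sub_apply, map_sub]
  congr 1
  · exact congrFun (congrFun h2 a) c
  · rcases eq_or_ne a c with rfl | hac
    · simp [Matrix.one_apply]
    · simp [Matrix.one_apply, hac]

lemma noetherian_key (k : ℕ) (W : Set (FreeGroup (Fin k))) :
    ∃ rs : Finset (FreeGroup (Fin k)), ↑rs ⊆ W ∧
      ∀ g : Fin k → M2ˣ, (∀ r ∈ rs, FreeGroup.lift g r = 1) →
        ∀ w ∈ W, FreeGroup.lift g w = 1 := by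
  classical
  set S : Set (QRing k) :=
    {q | ∃ w ∈ W, ∃ a c : Fin 2,
      q = (((Phi k w) : Matrix (Fin 2) (Fin 2) (QRing k)) - 1) a c} with hS
  obtain ⟨F, hF⟩ : (Ideal.span S).FG := IsNoetherian.noetherian (Ideal.span S)
  have hsub : ∀ f ∈ F, ∃ T : Finset (QRing k), ↑T ⊆ S ∧ f ∈ Ideal.span (T : Set (QRing k)) := by
    intro f hf
    have hfS : f ∈ Ideal.span S := by
      rw [← hF]; exact Ideal.subset_span (Finset.mem_coe.mpr hf)
    exact Submodule.mem_span_finite_of_mem_span hfS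
  choose T hT1 hT2 using hsub
  set Tall : Finset (QRing k) := F.attach.biUnion (fun f => T f.1 f.2) with hTall
  have hTallS : ↑Tall ⊆ S := by
    intro q hq
    rw [Finset.mem_coe, hTall, Finset.mem_biUnion] at hq
    obtain ⟨f, -, hq⟩ := hq
    exact hT1 f.1 f.2 hq
  have hJT : Ideal.span S ≤ Ideal.span (Tall : Set (QRing k)) := by
    rw [← hF]
    apply Ideal.span_le.mpr
    intro f hf
    rw [Finset.mem_coe] at hf
    have hsub2 : (T f hf : Set (QRing k)) ⊆ (Tall : Set (QRing k)) := by
      intro q hq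
      rw [Finset.mem_coe] at hq ⊢
      rw [hTall]
      exact Finset.mem_biUnion.mpr ⟨⟨f, hf⟩, Finset.mem_attach _ _, hq⟩
    exact SetLike.mem_coe.mpr (Ideal.span_mono hsub2 (hT2 f hf))
  have hwit : ∀ q ∈ Tall, ∃ w ∈ W, ∃ a c : Fin 2,
      q = (((Phi k w) : Matrix (Fin 2) (Fin 2) (QRing k)) - 1) a c := fun q hq => hTallS hq
  choose wq hwq1 hwq2 using hwit
  refine ⟨Tall.attach.image (fun q => wq q.1 q.2), ?_, ?_⟩
  · intro r hr
    obtain ⟨q, -, rfl⟩ := Finset.mem_image.mp hr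
    exact hwq1 q.1 q.2
  · intro g hg w hw
    -- ebar g kills Tall, hence span S
    have hkill : ∀ q ∈ (Tall : Set (QRing k)), q ∈ RingHom.ker (ebar k g) := by
      intro q hq
      rw [Finset.mem_coe] at hq
      rw [RingHom.mem_ker]
      obtain ⟨a, c, hqeq⟩ := hwq2 q hq
      have hr1 : FreeGroup.lift g (wq q hq) = 1 := by
        apply hg
        exact Finset.mem_image.mpr ⟨⟨q, hq⟩, Finset.mem_attach _ _, rfl⟩
      rw [hqeq, entry_ebar_Phi, hr1]
      simp
    have hkerJ : Ideal.span S ≤ RingHom.ker (ebar k g) :=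
      le_trans hJT (Ideal.span_le.mpr hkill)
    have hent : ∀ a c : Fin 2,
        ebar k g ((((Phi k w) : Matrix (Fin 2) (Fin 2) (QRing k)) - 1) a c) = 0 := by
      intro a c
      exact RingHom.mem_ker.mp (hkerJ (Ideal.subset_span ⟨w, hw, a, c, rfl⟩))
    apply Units.ext
    have hzero : ((FreeGroup.lift g w : M2ˣ) : M2) - 1 = 0 := by
      ext a c
      have := hent a c
      rw [entry_ebar_Phi] at this
      rw [Matrix.zero_apply]
      exact this
    have := sub_eq_zero.mp hzero
    rw [this]
    rfl


noncomputable section M4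
open FirstOrder FirstOrder.Language

variable {VT : Type} {M : Type} {N : Type} [Group M] [Group N]

lemma funMap0 (F : grpLang.Functions 0) (v' : Fin 0 → M) :
    Structure.funMap F v' = (1 : M) := rfl

lemma funMap1 (F : grpLang.Functions 1) (v' : Fin 1 → M) :
    Structure.funMap F v' = (v' 0)⁻¹ := rfl

lemma funMap2 (F : grpLang.Functions 2) (v' : Fin 2 → M) :
    Structure.funMap F v' = v' 0 * v' 1 := rfl

lemma hom_term_realize (f : M →* N) (t : grpLang.Term VT) (env : VT → M) :
    Term.realize (fun x => f (env x)) t = f (Term.realize env t) := by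
  induction t with
  | var v => simp
  | @func l F ts ih =>
      rcases l with _ | _ | _ | l
      · rw [Term.realize_func, Term.realize_func, funMap0, funMap0, map_one]
      · rw [Term.realize_func, Term.realize_func, funMap1, funMap1, map_inv, ih]
      · rw [Term.realize_func, Term.realize_func, funMap2, funMap2, map_mul, ih, ih]
      · exact Empty.elim F

def oneT {k : ℕ} : grpLang.Term (Empty ⊕ Fin k) := Term.func (l := 0) () ![]
def invT {k : ℕ} (t : grpLang.Term (Empty ⊕ Fin k)) : grpLang.Term (Empty ⊕ Fin k) :=
  Term.func (l := 1) () ![t]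
def mulT {k : ℕ} (t₁ t₂ : grpLang.Term (Empty ⊕ Fin k)) : grpLang.Term (Empty ⊕ Fin k) :=
  Term.func (l := 2) () ![t₁, t₂]

variable {k : ℕ}

lemma realize_oneT (env : Empty ⊕ Fin k → M) : Term.realize env (oneT : grpLang.Term _) = 1 := by
  erw [oneT, Term.realize_func, funMap0]

lemma realize_invT (env : Empty ⊕ Fin k → M) (t : grpLang.Term (Empty ⊕ Fin k)) :
    Term.realize env (invT t) = (Term.realize env t)⁻¹ := by
  erw [invT, Term.realize_func, funMap1]
  simp

lemma realize_mulT (env : Empty ⊕ Fin k → M) (t₁ t₂ : grpLang.Term (Empty ⊕ Fin k)) :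
    Term.realize env (mulT t₁ t₂) = Term.realize env t₁ * Term.realize env t₂ := by
  erw [mulT, Term.realize_func, funMap2]
  simp

def termOfList : List (Fin k × Bool) → grpLang.Term (Empty ⊕ Fin k)
  | [] => oneT
  | p :: L => mulT (cond p.2 (Term.var (Sum.inr p.1)) (invT (Term.var (Sum.inr p.1))))
      (termOfList L)

lemma realize_termOfList (env : Empty ⊕ Fin k → M) (L : List (Fin k × Bool)) :
    Term.realize env (termOfList L)
      = (L.map fun p => cond p.2 (env (Sum.inr p.1)) (env (Sum.inr p.1))⁻¹).prod := by
  induction L with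
  | nil => simp [termOfList, realize_oneT]
  | cons p L ih =>
      cases hp : p.2 <;>
        simp [termOfList, realize_mulT, realize_invT, ih, hp]

def termOfWord (w : FreeGroup (Fin k)) : grpLang.Term (Empty ⊕ Fin k) := termOfList w.toWord

lemma realize_termOfWord (venv : Empty → M) (z : Fin k → M) (w : FreeGroup (Fin k)) :
    Term.realize (Sum.elim venv z) (termOfWord w) = FreeGroup.lift z w := by
  rw [termOfWord, realize_termOfList]
  conv_rhs => rw [← FreeGroup.mk_toWord (x := w)]
  rw [FreeGroup.lift_mk]
  congr 1

def eqF (w₁ w₂ : FreeGroup (Fin k)) : grpLang.BoundedFormula Empty k :=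
  Term.bdEqual (termOfWord w₁) (termOfWord w₂)

lemma eqF_isQF (w₁ w₂ : FreeGroup (Fin k)) : (eqF w₁ w₂).IsQF :=
  (BoundedFormula.IsAtomic.equal _ _).isQF

lemma realize_eqF (venv : Empty → M) (xs : Fin k → M) (w₁ w₂ : FreeGroup (Fin k)) :
    (eqF w₁ w₂).Realize venv xs ↔ FreeGroup.lift xs w₁ = FreeGroup.lift xs w₂ := by
  rw [eqF, BoundedFormula.realize_bdEqual, realize_termOfWord, realize_termOfWord]

def conjF (l : List (grpLang.BoundedFormula Empty k)) : grpLang.BoundedFormula Empty k :=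
  l.foldr (· ⊓ ·) ⊤

def disjF (l : List (grpLang.BoundedFormula Empty k)) : grpLang.BoundedFormula Empty k :=
  l.foldr (· ⊔ ·) ⊥

lemma conjF_isQF (l : List (grpLang.BoundedFormula Empty k)) (h : ∀ φ ∈ l, φ.IsQF) :
    (conjF l).IsQF := by
  induction l with
  | nil => exact BoundedFormula.IsQF.top
  | cons φ l ih =>
      exact (h φ (List.mem_cons_self)).inf (ih fun ψ hψ => h ψ (List.mem_cons_of_mem _ hψ))

lemma disjF_isQF (l : List (grpLang.BoundedFormula Empty k)) (h : ∀ φ ∈ l, φ.IsQF) :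
    (disjF l).IsQF := by
  induction l with
  | nil => exact BoundedFormula.isQF_bot
  | cons φ l ih =>
      exact (h φ (List.mem_cons_self)).sup (ih fun ψ hψ => h ψ (List.mem_cons_of_mem _ hψ))

lemma realize_conjF (venv : Empty → M) (xs : Fin k → M)
    (l : List (grpLang.BoundedFormula Empty k)) :
    (conjF l).Realize venv xs ↔ ∀ φ ∈ l, φ.Realize venv xs := by
  induction l with
  | nil => simp [conjF]
  | cons φ l ih =>
      simp only [conjF, List.foldr_cons] at ih ⊢
      rw [BoundedFormula.realize_inf, ih]
      simp

lemma realize_disjF (venv : Empty → M) (xs : Fin k → M)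
    (l : List (grpLang.BoundedFormula Empty k)) :
    (disjF l).Realize venv xs ↔ ∃ φ ∈ l, φ.Realize venv xs := by
  induction l with
  | nil => simp [disjF]
  | cons φ l ih => simp [disjF, BoundedFormula.realize_sup, ih, List.foldr_cons]

lemma realize_hom_transfer {n : ℕ} {ψ : grpLang.BoundedFormula Empty n} (h : ψ.IsQF)
    (v : Empty → M) (xs : Fin n → M) :
    ∃ S : Finset M, ∀ (N' : Type) (_ : Group N'), ∀ f : M →* N', Set.InjOn f ↑S →
      (ψ.Realize v xs ↔ ψ.Realize (fun e => f (v e)) (fun i => f (xs i))) := by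
  classical
  induction h with
  | falsum =>
      refine ⟨∅, ?_⟩
      intro N' _ f _
      exact Iff.rfl
  | of_isAtomic h =>
      cases h with
      | equal t₁ t₂ =>
          refine ⟨{Term.realize (Sum.elim v xs) t₁, Term.realize (Sum.elim v xs) t₂}, ?_⟩
          intro N' _ f hf
          rw [BoundedFormula.realize_bdEqual, BoundedFormula.realize_bdEqual]
          have hcomp : (Sum.elim (fun e => f (v e)) (fun i => f (xs i)) : Empty ⊕ Fin n → N')
              = fun x => f (Sum.elim v xs x) := by
            funext x; cases x <;> rfl
          rw [hcomp, hom_term_realize, hom_term_realize]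
          constructor
          · intro he; rw [he]
          · intro he
            exact hf (by simp) (by simp) he
      | rel R ts => exact Empty.elim R
  | imp h1 h2 ih1 ih2 =>
      obtain ⟨S₁, hS₁⟩ := ih1
      obtain ⟨S₂, hS₂⟩ := ih2
      refine ⟨S₁ ∪ S₂, ?_⟩
      intro N' iN f hf
      rw [BoundedFormula.realize_imp, BoundedFormula.realize_imp,
        hS₁ N' iN f (hf.mono (by intro x hx; simp at hx ⊢; tauto)),
        hS₂ N' iN f (hf.mono (by intro x hx; simp at hx ⊢; tauto))]

end M4

noncomputable section M6

lemma realize_env_irrel {n : ℕ} (ψ : grpLang.BoundedFormula Empty n) {M : Type} [Group M]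
    (v v' : Empty → M) (xs : Fin n → M) : ψ.Realize v xs ↔ ψ.Realize v' xs := by
  rw [Subsingleton.elim v v']

lemma noetherian_key_free (k : ℕ) (W : Set (FreeGroup (Fin k))) :
    ∃ rs : Finset (FreeGroup (Fin k)), ↑rs ⊆ W ∧
      ∀ (β : Type) (x : Fin k → FreeGroup β), (∀ r ∈ rs, FreeGroup.lift x r = 1) →
        ∀ w ∈ W, FreeGroup.lift x w = 1 := by
  obtain ⟨rs, hrsW, hkey⟩ := noetherian_key k W
  refine ⟨rs, hrsW, ?_⟩
  intro β x hx w hw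
  obtain ⟨s, hs⟩ := exists_support (List.ofFn x)
  set x' : Fin k → FreeGroup {b // b ∈ s} := fun i => retr s (x i) with hx'
  have hix : ∀ i, incl s (x' i) = x i := by
    intro i
    exact hs (x i) (by rw [List.mem_ofFn]; exact ⟨i, rfl⟩)
  have hcomm : ∀ u : FreeGroup (Fin k),
      FreeGroup.lift x u = incl s (FreeGroup.lift x' u) := by
    intro u
    have h : (incl s).comp (FreeGroup.lift x') = FreeGroup.lift x := by
      apply FreeGroup.ext_hom
      intro i
      simp only [MonoidHom.comp_apply, FreeGroup.lift_apply_of]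
      exact hix i
    rw [← h]
    rfl
  obtain ⟨j, hj⟩ := exists_emb_to_M2 {b // b ∈ s}
  set g : Fin k → M2ˣ := fun i => j (x' i) with hg
  have hcommj : ∀ u : FreeGroup (Fin k),
      FreeGroup.lift g u = j (FreeGroup.lift x' u) := by
    intro u
    have h : j.comp (FreeGroup.lift x') = FreeGroup.lift g := by
      apply FreeGroup.ext_hom
      intro i
      simp only [MonoidHom.comp_apply, FreeGroup.lift_apply_of]
      rfl
    rw [← h]
    rfl
  have h1 : ∀ r ∈ rs, FreeGroup.lift g r = 1 := by
    intro r hr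
    have h2 : incl s (FreeGroup.lift x' r) = 1 := by rw [← hcomm]; exact hx r hr
    have h3 : FreeGroup.lift x' r = 1 := incl_injective s (by rw [h2, map_one])
    rw [hcommj, h3, map_one]
  have h4 := hkey g h1 w hw
  rw [hcommj] at h4
  have h5 : FreeGroup.lift x' w = 1 := hj (by rw [h4, map_one])
  rw [hcomm, h5, map_one]

theorem universalTheory_iff_locallyFullyResiduallyFree
    (G : Type) [Group G] (β : Type) [Nontrivial β] :
    (∀ φ : grpLang.Sentence, IsUniversalSentence φ →
        FreeGroup β ⊨ φ → G ⊨ φ) ↔ LocallyFullyResiduallyFree G := by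
  classical
  constructor
  · -- universal theory ⇒ locally fully residually free
    intro hyp H hFG S
    obtain ⟨Sgen, hSgen⟩ := hFG
    set k := Sgen.card with hk
    obtain ⟨gens, hgens⟩ : ∃ gens : Fin k → G, Set.range gens = ↑Sgen := by
      refine ⟨fun i => (Sgen.equivFin.symm i).1, ?_⟩
      ext y
      simp only [Set.mem_range]
      constructor
      · rintro ⟨i, rfl⟩; exact (Sgen.equivFin.symm i).2
      · intro hy
        exact ⟨Sgen.equivFin ⟨y, hy⟩, by simp⟩
    set π : FreeGroup (Fin k) →* G := FreeGroup.lift gens with hπ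
    have hrange : π.range = H := by
      rw [hπ, FreeGroup.range_lift_eq_closure, hgens, hSgen]
    set W : Set (FreeGroup (Fin k)) := {w | π w = 1} with hW
    obtain ⟨rs, hrsW, hkey⟩ := noetherian_key_free k W
    have hmem : ∀ s : ↥H, (s : G) ∈ π.range := fun s => by rw [hrange]; exact s.2
    set c : ↥H → FreeGroup (Fin k) := fun s => Classical.choose (hmem s) with hcdef
    have hc : ∀ s : ↥H, π (c s) = (s : G) := fun s => Classical.choose_spec (hmem s)
    set pl : List (↥H × ↥H) := ((S ×ˢ S).filter (fun p => p.1 ≠ p.2)).toList with hpl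
    set ψ : grpLang.BoundedFormula Empty k :=
      (conjF (rs.toList.map (fun r => eqF r 1))).imp
        (disjF (pl.map (fun p => eqF (c p.1) (c p.2)))) with hψ
    have hqf : ψ.IsQF := by
      apply FirstOrder.Language.BoundedFormula.IsQF.imp
      · apply conjF_isQF
        intro φ' hφ'
        obtain ⟨r, -, rfl⟩ := List.mem_map.mp hφ'
        exact eqF_isQF _ _
      · apply disjF_isQF
        intro φ' hφ'
        obtain ⟨p, -, rfl⟩ := List.mem_map.mp hφ'
        exact eqF_isQF _ _
    have hGnot : ¬ (G ⊨ ψ.alls) := by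
      intro hGal
      have h2 := (FirstOrder.Language.BoundedFormula.realize_alls.mp hGal) gens
      rw [FirstOrder.Language.BoundedFormula.realize_imp] at h2
      have h3 := h2 (by
        rw [realize_conjF]
        intro φ' hφ'
        obtain ⟨r, hr, rfl⟩ := List.mem_map.mp hφ'
        rw [realize_eqF]
        have hrW : r ∈ W := hrsW (Finset.mem_coe.mpr (Finset.mem_toList.mp hr))
        rw [map_one]
        exact hrW)
      rw [realize_disjF] at h3
      obtain ⟨φ', hφ', hreal⟩ := h3
      obtain ⟨p, hp, rfl⟩ := List.mem_map.mp hφ'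
      rw [realize_eqF] at hreal
      have heq : (p.1 : G) = (p.2 : G) := by rw [← hc p.1, ← hc p.2]; exact hreal
      have hpp := Finset.mem_filter.mp (Finset.mem_toList.mp hp)
      exact hpp.2 (Subtype.ext heq)
    have hFnot : ¬ (FreeGroup β ⊨ ψ.alls) := fun hFal =>
      hGnot (hyp ψ.alls ⟨k, ψ, hqf, rfl⟩ hFal)
    have hFnot2 : ¬ ∀ x : Fin k → FreeGroup β,
        ψ.Realize (default : Empty → FreeGroup β) x := fun hh =>
      hFnot (FirstOrder.Language.BoundedFormula.realize_alls.mpr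
        (fun xs => (realize_env_irrel ψ _ _ xs).mp (hh xs)))
    push_neg at hFnot2
    obtain ⟨x, hx⟩ := hFnot2
    rw [hψ, FirstOrder.Language.BoundedFormula.realize_imp] at hx
    push_neg at hx
    obtain ⟨hA, hB⟩ := hx
    have hA' : ∀ r ∈ rs, FreeGroup.lift x r = 1 := by
      intro r hr
      have h := (realize_conjF _ _ _).mp hA (eqF r 1)
        (List.mem_map.mpr ⟨r, Finset.mem_toList.mpr hr, rfl⟩)
      rw [realize_eqF, map_one] at h
      exact h
    have hkill := hkey β x hA'
    have hcongr : ∀ a b : FreeGroup (Fin k), π a = π b →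
        FreeGroup.lift x a = FreeGroup.lift x b := by
      intro a b hab
      have h : FreeGroup.lift x (a * b⁻¹) = 1 := hkill _ (by
        show π (a * b⁻¹) = 1
        rw [map_mul, map_inv, hab, mul_inv_cancel])
      rw [map_mul, map_inv] at h
      exact mul_inv_eq_one.mp h
    set f : ↥H →* FreeGroup β := MonoidHom.mk' (fun s => FreeGroup.lift x (c s)) (by
      intro a b
      show FreeGroup.lift x (c (a * b)) = FreeGroup.lift x (c a) * FreeGroup.lift x (c b)
      have h : FreeGroup.lift x (c (a * b)) = FreeGroup.lift x (c a * c b) :=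
        hcongr _ _ (by rw [hc, map_mul, hc, hc]; rfl)
      rw [h, map_mul]) with hf
    refine ⟨β, f, ?_⟩
    intro s hs t ht hst
    by_contra hne
    have hpmem : (s, t) ∈ pl := Finset.mem_toList.mpr (Finset.mem_filter.mpr
      ⟨Finset.mem_product.mpr ⟨hs, ht⟩, hne⟩)
    apply hB
    rw [realize_disjF]
    exact ⟨eqF (c s) (c t), List.mem_map.mpr ⟨(s, t), hpmem, rfl⟩,
      (realize_eqF _ _ _ _).mpr hst⟩
  · -- locally fully residually free ⇒ universal theory
    intro hL φ hU hF
    obtain ⟨n, ψ, hqf, rfl⟩ := hU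
    apply FirstOrder.Language.BoundedFormula.realize_alls.mpr
    intro xs
    set Hsub : Subgroup G := Subgroup.closure (Set.range xs) with hH
    have hfg : Hsub.FG := ⟨(Set.range xs).toFinset, by rw [Set.coe_toFinset]⟩
    have hres : FullyResiduallyFree ↥Hsub := hL Hsub hfg
    set xs' : Fin n → ↥Hsub :=
      fun i => ⟨xs i, Subgroup.subset_closure (Set.mem_range_self i)⟩ with hxs'
    obtain ⟨S₀, hS₀⟩ := realize_hom_transfer hqf (default : Empty → ↥Hsub) xs'
    obtain ⟨α, f, hfinj⟩ := hres S₀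
    obtain ⟨S₂, hS₂⟩ := realize_hom_transfer hqf (default : Empty → FreeGroup α)
      (fun i => f (xs' i))
    obtain ⟨b₁, b₂, hb⟩ := exists_pair_ne β
    obtain ⟨g, hg⟩ := exists_injOn_freeGroup α β b₁ b₂ hb S₂.toList
    have hginj : Set.InjOn g ↑S₂ := by
      intro a ha b hb' hab
      exact hg a (Finset.mem_toList.mpr ha) b (Finset.mem_toList.mpr hb') hab
    have hFall := FirstOrder.Language.BoundedFormula.realize_alls.mp hF
    have c3 : ψ.Realize (default : Empty → FreeGroup α) (fun i => f (xs' i)) := by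
      rw [hS₂ (FreeGroup β) inferInstance g hginj,
        realize_env_irrel ψ _ (default : Empty → FreeGroup β)]
      exact (realize_env_irrel ψ _ _ _).mp (hFall (fun i => g (f (xs' i))))
    have c2 : ψ.Realize (default : Empty → ↥Hsub) xs' := by
      rw [hS₀ (FreeGroup α) inferInstance f hfinj,
        realize_env_irrel ψ _ (default : Empty → FreeGroup α)]
      exact c3
    have hsubinj : Function.Injective (Hsub.subtype) := fun a b hab => Subtype.ext hab
    have c1 : ψ.Realize (fun e => Hsub.subtype ((default : Empty → ↥Hsub) e))
        (fun i => Hsub.subtype (xs' i)) :=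
      (hS₀ G inferInstance Hsub.subtype hsubinj.injOn).mp c2
    have hid : (fun i => Hsub.subtype (xs' i)) = xs := rfl
    rw [hid] at c1
    exact (realize_env_irrel ψ _ _ xs).mp c1

end M6
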